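/- arXiv:1701.02375 — 5 statements merged into one kernel-verified Lean document; each statement's English description precedes it below -/
import Mathlib

section
/- For every ε with 0 < ε ≤ 1/9 and every real t ≥ (1+ε)·√(8ε), we have cosh t ≤ exp((1-ε)·t²/2). -/
open Real Set

lemma nonneg_of_deriv (f f' : ℝ → ℝ) (h0 : f 0 = 0)
    (hf : ∀ x, HasDerivAt f (f' x) x)
    (hd : ∀ x, 0 ≤ x → 0 ≤ f' x) : ∀ t, 0 ≤ t → 0 ≤ f t := by
  intro t ht
  have hmono : MonotoneOn f (Ici (0:ℝ)) := by
    apply monotoneOn_of_deriv_nonneg (convex_Ici 0)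
      (fun x _ => (hf x).continuousAt.continuousWithinAt)
      (fun x hx => ((hf x).differentiableAt).differentiableWithinAt)
    intro x hx
    rw [interior_Ici] at hx
    rw [(hf x).deriv]
    exact hd x hx.le
  have := hmono (self_mem_Ici) ht ht
  rwa [h0] at this

lemma L1 : ∀ t : ℝ, 0 ≤ t → Real.sinh t ≤ t * Real.cosh t := by
  have h := nonneg_of_deriv (fun t => t * Real.cosh t - Real.sinh t)
    (fun t => t * Real.sinh t) (by simp)
    (fun x => by
      have : HasDerivAt (fun t => t * Real.cosh t - Real.sinh t)
          (1 * Real.cosh x + x * Real.sinh x - Real.cosh x) x :=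
        ((hasDerivAt_id x).mul (Real.hasDerivAt_cosh x)).sub (Real.hasDerivAt_sinh x)
      convert this using 1; ring)
    (fun x hx => mul_nonneg hx (Real.sinh_nonneg_iff.2 hx))
  intro t ht
  have := h t ht
  linarith

lemma L2 : ∀ t : ℝ, 0 ≤ t → (t - t^3/3) * Real.cosh t ≤ Real.sinh t := by
  have h := nonneg_of_deriv (fun t => Real.sinh t - (t - t^3/3) * Real.cosh t)
    (fun t => (t * Real.cosh t - Real.sinh t) * t + (t^3/3) * Real.sinh t) (by simp)
    (fun x => by
      have : HasDerivAt (fun t => Real.sinh t - (t - t^3/3) * Real.cosh t)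
          (Real.cosh x - ((1 - (3 : ℕ) * x^2/3) * Real.cosh x + (x - x^3/3) * Real.sinh x)) x := by
        exact (Real.hasDerivAt_sinh x).sub
          ((((hasDerivAt_id x).sub ((hasDerivAt_pow 3 x).div_const 3)).mul (Real.hasDerivAt_cosh x)))
      convert this using 1; push_cast; ring)
    (fun x hx => by
      have h1 := L1 x hx
      have hc : (0:ℝ) ≤ Real.sinh x := Real.sinh_nonneg_iff.2 hx
      have h3 : (0:ℝ) ≤ x^3/3 := by positivity
      nlinarith)
  intro t ht
  have := h t ht
  linarith

lemma L3 : ∀ t : ℝ, 0 ≤ t → Real.sinh t ≤ (t - t^3/3 + 2*t^5/15) * Real.cosh t := by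
  have h := nonneg_of_deriv (fun t => (t - t^3/3 + 2*t^5/15) * Real.cosh t - Real.sinh t)
    (fun t => (-t^2 + 2*t^4/3) * Real.cosh t + (t - t^3/3 + 2*t^5/15) * Real.sinh t) (by simp)
    (fun x => by
      have : HasDerivAt (fun t => (t - t^3/3 + 2*t^5/15) * Real.cosh t - Real.sinh t)
          (((1 - (3:ℕ) * x^2/3 + 2 * ((5:ℕ) * x^4)/15) * Real.cosh x
            + (x - x^3/3 + 2*x^5/15) * Real.sinh x) - Real.cosh x) x := by
        exact ((((hasDerivAt_id x).sub ((hasDerivAt_pow 3 x).div_const 3)).add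
          (((hasDerivAt_pow 5 x).const_mul 2).div_const 15)).mul (Real.hasDerivAt_cosh x)).sub
          (Real.hasDerivAt_sinh x)
      convert this using 1; push_cast; ring)
    (fun x hx => by
      have h2 := L2 x hx
      have hc : (0:ℝ) < Real.cosh x := Real.cosh_pos x
      have hs : (0:ℝ) ≤ Real.sinh x := Real.sinh_nonneg_iff.2 hx
      have hP : (0:ℝ) ≤ x - x^3/3 + 2*x^5/15 := by nlinarith [sq_nonneg (x^2 - 5/2), sq_nonneg x, mul_nonneg hx (sq_nonneg (x^2-5/2))]
      rcases le_or_gt (x^2) (3/2) with hcase | hcase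
      · -- small x ; use h2
        have key : (0:ℝ) ≤ (x^6 * (11 - 2*x^2)/45) * Real.cosh x := by
          apply mul_nonneg _ hc.le
          have h6 : (0:ℝ) ≤ x^6 := pow_nonneg hx 6
          nlinarith
        nlinarith [mul_le_mul_of_nonneg_left h2 hP, key]
      · have hpos : (0:ℝ) ≤ -x^2 + 2*x^4/3 := by nlinarith
        have := mul_nonneg hP hs
        nlinarith [mul_nonneg hpos hc.le])
  intro t ht
  have := h t ht
  linarith

lemma L4 : ∀ t : ℝ, 0 ≤ t → Real.cosh t ≤ Real.exp (t^2/2 - t^4/12 + t^6/45) := by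
  have h := nonneg_of_deriv (fun t => 1 - Real.exp (-(t^2/2 - t^4/12 + t^6/45)) * Real.cosh t)
    (fun t => Real.exp (-(t^2/2 - t^4/12 + t^6/45)) *
      ((t - t^3/3 + 2*t^5/15) * Real.cosh t - Real.sinh t)) (by simp)
    (fun x => by
      have hq : HasDerivAt (fun t : ℝ => -(t^2/2 - t^4/12 + t^6/45))
          (-(x - x^3/3 + 2*x^5/15)) x := by
        have h : HasDerivAt (fun t : ℝ => -(t^2/2 - t^4/12 + t^6/45)) _ x := ((((hasDerivAt_pow 2 x).div_const 2).sub ((hasDerivAt_pow 4 x).div_const 12)).add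
          ((hasDerivAt_pow 6 x).div_const 45)).neg
        convert h using 1
        norm_num
        ring
      have he := hq.exp
      have h2 : HasDerivAt (fun t => 1 - Real.exp (-(t^2/2 - t^4/12 + t^6/45)) * Real.cosh t) _ x := (hasDerivAt_const x (1:ℝ)).sub (he.mul (Real.hasDerivAt_cosh x))
      convert h2 using 1
      ring)
    (fun x hx => by
      have h3 := L3 x hx
      have : (0:ℝ) < Real.exp (-(x^2/2 - x^4/12 + x^6/45)) := Real.exp_pos _
      nlinarith)
  intro t ht
  have h' := h t ht
  have hE : Real.exp (-(t^2/2 - t^4/12 + t^6/45)) * Real.cosh t ≤ 1 := by linarith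
  calc Real.cosh t
      = Real.exp (t^2/2 - t^4/12 + t^6/45) * (Real.exp (-(t^2/2 - t^4/12 + t^6/45)) * Real.cosh t) := by
        rw [← mul_assoc, ← Real.exp_add]
        rw [show t^2/2 - t^4/12 + t^6/45 + -(t^2/2 - t^4/12 + t^6/45) = 0 by ring, Real.exp_zero, one_mul]
    _ ≤ Real.exp (t^2/2 - t^4/12 + t^6/45) * 1 :=
        mul_le_mul_of_nonneg_left hE (Real.exp_pos _).le
    _ = _ := mul_one _

lemma L6a : ∀ t : ℝ, 0 ≤ t → 1 + t + t^2/2 ≤ Real.exp t := by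
  have h := nonneg_of_deriv (fun t => Real.exp t - (1 + t + t^2/2))
    (fun t => Real.exp t - (1 + t)) (by simp)
    (fun x => by
      have h1 : HasDerivAt (fun t : ℝ => 1 + t + t^2/2) (0 + 1 + ((2:ℕ) * x^(2-1))/2) x :=
        (((hasDerivAt_const x (1:ℝ)).add (hasDerivAt_id x)).add ((hasDerivAt_pow 2 x).div_const 2))
      have : HasDerivAt (fun t => Real.exp t - (1 + t + t^2/2)) _ x := (Real.hasDerivAt_exp x).sub h1
      convert this using 1; norm_num)
    (fun x hx => by have := Real.add_one_le_exp x; linarith)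
  intro t ht; have := h t ht; linarith

lemma L6 : ∀ t : ℝ, 0 ≤ t → 1 + t + t^2/2 + t^3/6 ≤ Real.exp t := by
  have h := nonneg_of_deriv (fun t => Real.exp t - (1 + t + t^2/2 + t^3/6))
    (fun t => Real.exp t - (1 + t + t^2/2)) (by simp)
    (fun x => by
      have h1 : HasDerivAt (fun t : ℝ => 1 + t + t^2/2 + t^3/6)
          (0 + 1 + ((2:ℕ) * x^(2-1))/2 + ((3:ℕ) * x^(3-1))/6) x :=
        ((((hasDerivAt_const x (1:ℝ)).add (hasDerivAt_id x)).add
          ((hasDerivAt_pow 2 x).div_const 2)).add ((hasDerivAt_pow 3 x).div_const 6))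
      have : HasDerivAt (fun t => Real.exp t - (1 + t + t^2/2 + t^3/6)) _ x := (Real.hasDerivAt_exp x).sub h1
      convert this using 1; norm_num; ring)
    (fun x hx => by have := L6a x hx; linarith)
  intro t ht; have := h t ht; linarith

lemma L5 : ∀ u : ℝ, 0 ≤ u → (1 - u + u^2/2 - u^3/6) * Real.exp u ≤ 1 := by
  have h := nonneg_of_deriv (fun u => 1 - (1 - u + u^2/2 - u^3/6) * Real.exp u)
    (fun u => u^3 * Real.exp u / 6) (by simp)
    (fun x => by
      have h1 : HasDerivAt (fun t : ℝ => 1 - t + t^2/2 - t^3/6)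
          (0 - 1 + ((2:ℕ) * x^(2-1))/2 - ((3:ℕ) * x^(3-1))/6) x :=
        ((((hasDerivAt_const x (1:ℝ)).sub (hasDerivAt_id x)).add
          ((hasDerivAt_pow 2 x).div_const 2)).sub ((hasDerivAt_pow 3 x).div_const 6))
      have : HasDerivAt (fun u => 1 - (1 - u + u^2/2 - u^3/6) * Real.exp u) _ x := (hasDerivAt_const x (1:ℝ)).sub (h1.mul (Real.hasDerivAt_exp x))
      convert this using 1; push_cast; ring)
    (fun x hx => by positivity)
  intro u hu; have := h u hu; linarith

lemma exp_neg_le (s : ℝ) (hs : 0 ≤ s) : Real.exp (-s) ≤ 1 / (1 + s + s^2/2 + s^3/6) := by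
  have h6 := L6 s hs
  have hpos : (0:ℝ) < 1 + s + s^2/2 + s^3/6 := by positivity
  rw [Real.exp_neg, ← one_div]
  exact one_div_le_one_div_of_le hpos h6

set_option maxHeartbeats 1000000 in
theorem stmt_3 (ε : ℝ) (hε0 : 0 < ε) (hε1 : ε ≤ 1/9) (t : ℝ)
    (ht : t ≥ (1 + ε) * Real.sqrt (8 * ε)) :
    Real.cosh t ≤ Real.exp ((1 - ε) * t^2 / 2) := by
  have h8 : (0:ℝ) < 8 * ε := by linarith
  have hsqrt : 0 < Real.sqrt (8 * ε) := Real.sqrt_pos.2 h8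
  have ht0 : 0 < (1 + ε) * Real.sqrt (8 * ε) := by positivity
  have htpos : 0 < t := lt_of_lt_of_le ht0 ht
  have ht2 : 8 * ε * (1 + ε)^2 ≤ t^2 := by
    have hsq : ((1 + ε) * Real.sqrt (8 * ε))^2 = (1 + ε)^2 * (8 * ε) := by
      rw [mul_pow, Real.sq_sqrt h8.le]
    have := pow_le_pow_left₀ ht0.le ht 2
    rw [hsq] at this
    linarith
  have he2 : ε^2 ≤ ε/9 := by nlinarith
  have he3 : ε^3 ≤ ε/81 := by nlinarith
  have he4 : ε^4 ≤ ε/729 := by nlinarith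
  have he5 : ε^5 ≤ ε/6561 := by nlinarith
  rcases le_or_gt t (42/25) with hA | hB
  · -- small t: use degree-6 bound
    have h4 := L4 t htpos.le
    apply h4.trans
    apply Real.exp_le_exp.2
    have hu1 : t^2 ≤ 1764/625 := by nlinarith
    have hgap : (0:ℝ) < 1764/625 - 8 * ε * (1 + ε)^2 := by nlinarith
    have hu0 : 120*(1+ε)^2 - 256*ε*(1+ε)^4 - 90 ≥ 0 := by nlinarith
    have hf0 : 15*(8*ε*(1+ε)^2) - 4*(8*ε*(1+ε)^2)^2 - 90*ε ≥ 0 := by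
      nlinarith [mul_nonneg hε0.le hu0]
    have hf1 : 15*(1764/625 : ℝ) - 4*(1764/625 : ℝ)^2 - 90*ε ≥ 0 := by nlinarith
    have hf : 15*t^2 - 4*t^4 - 90*ε ≥ 0 := by
      nlinarith [mul_nonneg (by linarith : (0:ℝ) ≤ 1764/625 - t^2) hf0,
        mul_nonneg (by linarith : (0:ℝ) ≤ t^2 - 8*ε*(1+ε)^2) hf1,
        mul_nonneg (mul_nonneg (by linarith : (0:ℝ) ≤ t^2 - 8*ε*(1+ε)^2)
          (by linarith : (0:ℝ) ≤ 1764/625 - t^2)) hgap.le]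
    nlinarith [mul_nonneg hf (sq_nonneg t)]
  rcases le_or_gt t (9/4) with hB2 | hC
  · -- middle range
    have hx0 : -(266/625 : ℝ) ≤ (4/9)*t^2 - t := by nlinarith
    have hexp1 := Real.exp_le_exp.2 hx0
    have hlow : (1:ℝ) - 266/625 + (266/625)^2/2 - (266/625)^3/6 ≤
        Real.exp (-(266/625 : ℝ)) := by
      have h5 := L5 (266/625) (by norm_num)
      rw [Real.exp_neg, ← one_div, le_div_iff₀ (Real.exp_pos _)]
      exact h5
    have h2t : Real.exp (-(2*t)) ≤ Real.exp (-(84/25 : ℝ)) :=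
      Real.exp_le_exp.2 (by linarith)
    have hneg := exp_neg_le (84/25) (by norm_num)
    have hnum : (1:ℝ) + 1/(1 + 84/25 + (84/25)^2/2 + (84/25)^3/6) ≤
        2 * (1 - 266/625 + (266/625)^2/2 - (266/625)^3/6) := by norm_num
    have key : 1 + Real.exp (-(2*t)) ≤ 2 * Real.exp ((4/9)*t^2 - t) := by
      have h1 := h2t.trans hneg
      have h2 := hlow.trans hexp1
      linarith
    have hmid : Real.cosh t ≤ Real.exp ((4/9)*t^2) := by
      rw [Real.cosh_eq]
      have hme : Real.exp (-t) = Real.exp t * Real.exp (-(2*t)) := by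
        rw [← Real.exp_add]; congr 1; ring
      have h49 : Real.exp ((4/9)*t^2) = Real.exp t * Real.exp ((4/9)*t^2 - t) := by
        rw [← Real.exp_add]; congr 1; ring
      rw [hme, h49]
      have hp := (Real.exp_pos t).le
      have := mul_le_mul_of_nonneg_left key hp
      ring_nf at this ⊢
      linarith
    apply hmid.trans (Real.exp_le_exp.2 ?_)
    nlinarith [sq_nonneg t]
  · -- large t
    have hc : Real.cosh t ≤ Real.exp t := by
      rw [Real.cosh_eq]
      have := Real.exp_le_exp.2 (neg_le_self htpos.le)
      linarith
    apply hc.trans (Real.exp_le_exp.2 ?_)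
    nlinarith
end

section
/- Let 0 < ε ≤ 1/9 and u ≥ √(8ε). Then (1+ε)·u²/2 − log(cosh((1+ε)u)) ≥ ε²·u²/2. -/
open Real

set_option maxHeartbeats 1000000

private lemma mono_from (a : ℝ) (f f' : ℝ → ℝ) (hd : ∀ x, HasDerivAt f (f' x) x)
    (h0 : ∀ x, a < x → 0 ≤ f' x) : ∀ t, a ≤ t → f a ≤ f t := by
  intro t ht
  have hdiff : Differentiable ℝ f := fun x => (hd x).differentiableAt
  have hmono := monotoneOn_of_deriv_nonneg (convex_Ici a) hdiff.continuous.continuousOn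
    (hdiff.differentiableOn)
    (fun x hx => by
      rw [(hd x).deriv]
      exact h0 x (by simpa using hx))
  exact hmono Set.self_mem_Ici ht ht

private lemma sinh_le_mul_cosh (t : ℝ) (ht : 0 ≤ t) : Real.sinh t ≤ t * Real.cosh t := by
  have key := mono_from 0 (fun x => x * Real.cosh x - Real.sinh x)
      (fun x => x * Real.sinh x)
      (fun x => by
        have h1 := Real.hasDerivAt_cosh x
        have h2 := Real.hasDerivAt_sinh x
        have h3 := ((hasDerivAt_id x).mul h1).sub h2
        refine h3.congr_deriv ?_
        simp only [id_eq]
        ring)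
      (fun x hx => mul_nonneg hx.le (Real.sinh_nonneg_iff.2 hx.le))
      t ht
  simp only [Real.cosh_zero, Real.sinh_zero, mul_one, zero_mul, sub_zero, zero_sub,
    neg_nonpos] at key
  linarith [key]

private lemma mul_cosh_le_sinh (t : ℝ) (ht : 0 ≤ t) :
    (t - t^3/3) * Real.cosh t ≤ Real.sinh t := by
  have key := mono_from 0 (fun x => Real.sinh x - (x - x^3/3) * Real.cosh x)
      (fun x => x^2 * Real.cosh x - (x - x^3/3) * Real.sinh x)
      (fun x => by
        have h1 := Real.hasDerivAt_cosh x
        have h2 := Real.hasDerivAt_sinh x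
        have hp : HasDerivAt (fun x : ℝ => x - x^3/3) (1 - x^2) x := by
          have := (hasDerivAt_id x).sub ((hasDerivAt_pow 3 x).div_const 3)
          refine this.congr_deriv ?_
          push_cast
          ring
        have h3 := h2.sub (hp.mul h1)
        refine h3.congr_deriv ?_
        ring)
      (fun x hx => by
        show (0:ℝ) ≤ x^2 * Real.cosh x - (x - x^3/3) * Real.sinh x
        have hc := Real.cosh_pos x
        have hs : Real.sinh x ≤ x * Real.cosh x := sinh_le_mul_cosh x hx.le
        have hs0 : 0 ≤ Real.sinh x := Real.sinh_nonneg_iff.2 hx.le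
        rcases le_or_gt (x - x^3/3) 0 with h | h
        · nlinarith [mul_nonneg (sq_nonneg x) hc.le, mul_nonneg (neg_nonneg.2 h) hs0]
        · nlinarith [mul_le_mul_of_nonneg_left hs h.le,
            mul_nonneg (mul_nonneg (pow_nonneg hx.le 4) hc.le) (by norm_num : (0:ℝ) ≤ 1/3)])
      t ht
  simp only [Real.cosh_zero, Real.sinh_zero, mul_one, zero_sub, sub_zero] at key
  norm_num at key
  linarith [key]

private lemma sinh_le_poly_mul_cosh (t : ℝ) (ht : 0 ≤ t) :
    Real.sinh t ≤ (t - t^3/3 + 2/15*t^5) * Real.cosh t := by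
  have key := mono_from 0 (fun x => (x - x^3/3 + 2/15*x^5) * Real.cosh x - Real.sinh x)
      (fun x => (-x^2 + 2/3*x^4) * Real.cosh x + (x - x^3/3 + 2/15*x^5) * Real.sinh x)
      (fun x => by
        have h1 := Real.hasDerivAt_cosh x
        have h2 := Real.hasDerivAt_sinh x
        have hp : HasDerivAt (fun x : ℝ => x - x^3/3 + 2/15*x^5) (1 - x^2 + 2/3*x^4) x := by
          have := ((hasDerivAt_id x).sub ((hasDerivAt_pow 3 x).div_const 3)).add
            ((hasDerivAt_pow 5 x).const_mul (2/15 : ℝ))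
          refine this.congr_deriv ?_
          push_cast
          ring
        have h3 := (hp.mul h1).sub h2
        refine h3.congr_deriv ?_
        ring)
      (fun x hx => by
        show (0:ℝ) ≤ (-x^2 + 2/3*x^4) * Real.cosh x + (x - x^3/3 + 2/15*x^5) * Real.sinh x
        have hc := Real.cosh_pos x
        have hs0 : 0 ≤ Real.sinh x := Real.sinh_nonneg_iff.2 hx.le
        have hpnn : 0 ≤ x - x^3/3 + 2/15*x^5 := by
          nlinarith [sq_nonneg (x^2 - 5/2), hx.le, mul_nonneg hx.le (sq_nonneg (x^2 - 5/2))]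
        rcases le_or_gt (x^2) (3/2) with h | h
        · have hs := mul_cosh_le_sinh x hx.le
          have h2 := mul_le_mul_of_nonneg_left hs hpnn
          nlinarith [h2, mul_nonneg (mul_nonneg (pow_nonneg hx.le 6) hc.le)
            (by linarith : (0:ℝ) ≤ 11 - 2*x^2)]
        · have hcoefpos : (0:ℝ) ≤ -x^2 + 2/3*x^4 := by nlinarith
          nlinarith [mul_nonneg hpnn hs0, mul_nonneg hcoefpos hc.le])
      t ht
  simp only [Real.cosh_zero, Real.sinh_zero, mul_one, sub_zero] at key
  norm_num at key
  linarith [key]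

private lemma log_cosh_le (v : ℝ) (hv : 0 ≤ v) :
    Real.log (Real.cosh v) ≤ v^2/2 - v^4/12 + v^6/45 := by
  have key := mono_from 0 (fun x => x^2/2 - x^4/12 + x^6/45 - Real.log (Real.cosh x))
      (fun x => x - x^3/3 + 2/15*x^5 - Real.sinh x / Real.cosh x)
      (fun x => by
        have hc := (Real.cosh_pos x).ne'
        have hlog : HasDerivAt (fun x : ℝ => Real.log (Real.cosh x))
            (Real.sinh x / Real.cosh x) x := (Real.hasDerivAt_cosh x).log hc
        have hp : HasDerivAt (fun x : ℝ => x^2/2 - x^4/12 + x^6/45)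
            (x - x^3/3 + 2/15*x^5) x := by
          have := (((hasDerivAt_pow 2 x).div_const 2).sub
            ((hasDerivAt_pow 4 x).div_const 12)).add ((hasDerivAt_pow 6 x).div_const 45)
          refine this.congr_deriv ?_
          push_cast
          ring
        exact hp.sub hlog)
      (fun x hx => by
        show (0:ℝ) ≤ x - x^3/3 + 2/15*x^5 - Real.sinh x / Real.cosh x
        have hc := Real.cosh_pos x
        have hb := sinh_le_poly_mul_cosh x hx.le
        rw [sub_nonneg, div_le_iff₀ hc]
        linarith)
      v hv
  simp only [Real.cosh_zero, Real.log_one] at key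
  norm_num at key
  linarith [key]

theorem stmt_5 (ε : ℝ) (hε0 : 0 < ε) (hε1 : ε ≤ 1/9) (u : ℝ)
    (hu : u ≥ Real.sqrt (8 * ε)) :
    (1 + ε) * u^2 / 2 - Real.log (Real.cosh ((1 + ε) * u)) ≥ ε^2 * u^2 / 2 := by
  have hε' : (0:ℝ) < 8 * ε := by linarith
  have hsq : Real.sqrt (8 * ε) ^ 2 = 8 * ε := Real.sq_sqrt hε'.le
  have hsqpos : 0 < Real.sqrt (8 * ε) := Real.sqrt_pos.2 hε'
  have hu0 : 0 < u := lt_of_lt_of_le hsqpos hu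
  have h1ε : (0:ℝ) < 1 + ε := by linarith
  set v₀ : ℝ := (1 + ε) * Real.sqrt (8 * ε) with hv₀
  set v : ℝ := (1 + ε) * u with hvdef
  have hv₀pos : 0 < v₀ := mul_pos h1ε hsqpos
  have hv0v : v₀ ≤ v := mul_le_mul_of_nonneg_left hu h1ε.le
  set A : ℝ := (1 + ε - ε^2) / (2 * (1 + ε)^2) with hA
  have hsq1 : (0:ℝ) < (1+ε)^2 := by positivity
  have hnum : (0:ℝ) < 1 + ε - ε^2 := by nlinarith
  -- D is monotone on [v₀, ∞)
  have key := mono_from v₀ (fun w => A * w^2 - Real.log (Real.cosh w))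
      (fun w => A * (2*w) - Real.sinh w / Real.cosh w)
      (fun w => by
        have hc := (Real.cosh_pos w).ne'
        have hlog : HasDerivAt (fun w : ℝ => Real.log (Real.cosh w))
            (Real.sinh w / Real.cosh w) w := (Real.hasDerivAt_cosh w).log hc
        have hp : HasDerivAt (fun w : ℝ => A * w^2) (A * (2*w)) w := by
          have := (hasDerivAt_pow 2 w).const_mul A
          refine this.congr_deriv ?_
          push_cast
          ring
        exact hp.sub hlog)
      (fun w hw => by
        show (0:ℝ) ≤ A * (2*w) - Real.sinh w / Real.cosh w
        have hwpos : 0 < w := lt_trans hv₀pos hw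
        have hc := Real.cosh_pos w
        have hw2 : 8 * ε * (1+ε)^2 ≤ w^2 := by
          have h := pow_le_pow_left₀ hv₀pos.le hw.le 2
          rw [hv₀, mul_pow, hsq] at h
          linarith
        rw [sub_nonneg, div_le_iff₀ hc]
        have h2A : A * (2*w) = (1 + ε - ε^2) / (1+ε)^2 * w := by
          rw [hA]; field_simp
        rcases le_or_gt 1 ((1 + ε - ε^2) / (1+ε)^2 * w) with h | h
        · have hsc := Real.sinh_lt_cosh (x := w)
          rw [h2A]
          nlinarith [mul_le_mul_of_nonneg_right h hc.le]
        · -- small w : use polynomial bound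
          have hpoly := sinh_le_poly_mul_cosh w hwpos.le
          rw [h2A]
          have hwlt : (1 + ε - ε^2) * w < (1+ε)^2 := by
            rw [div_mul_eq_mul_div, div_lt_one hsq1] at h
            linarith
          have hwub : w ≤ 100/89 := by nlinarith
          have hs_ub : w^2 ≤ 10000/7921 := by nlinarith
          have hcoef : (w - w^3/3 + 2/15*w^5) * (1+ε)^2 ≤ (1+ε-ε^2)*w := by
            have hkey : (ε + 2*ε^2) ≤ (1+ε)^2 * (w^2/3 - 2/15*w^4) := by
              nlinarith [mul_nonneg (sub_nonneg.2 hw2) (sub_nonneg.2 hs_ub), sq_nonneg ε,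
                mul_pos hε0 hε0, sq_nonneg (1+ε), mul_nonneg hε0.le hε0.le,
                mul_nonneg (mul_nonneg hε0.le hε0.le) hε0.le, sq_nonneg w, sq_nonneg (w*(1+ε))]
            nlinarith [mul_pos hwpos hwpos, hkey, mul_le_mul_of_nonneg_left hkey hwpos.le]
          have hcoef' : (w - w^3/3 + 2/15*w^5) ≤ (1+ε-ε^2) / (1+ε)^2 * w := by
            have h3 := mul_le_mul_of_nonneg_right hcoef (inv_pos.2 hsq1).le
            rw [mul_assoc, mul_inv_cancel₀ hsq1.ne', mul_one] at h3
            have e2 : (1+ε-ε^2)*w*((1+ε)^2)⁻¹ = (1+ε-ε^2)/(1+ε)^2*w := by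
              field_simp
            linarith [h3]
          calc Real.sinh w ≤ (w - w^3/3 + 2/15*w^5) * Real.cosh w := hpoly
            _ ≤ (1 + ε - ε^2) / (1+ε)^2 * w * Real.cosh w := by
                exact mul_le_mul_of_nonneg_right hcoef' hc.le)
      v hv0v
  -- D v₀ ≥ 0
  have hDv₀ : 0 ≤ A * v₀^2 - Real.log (Real.cosh v₀) := by
    have hlc := log_cosh_le v₀ hv₀pos.le
    have hv₀sq : v₀^2 = 8*ε*(1+ε)^2 := by rw [hv₀, mul_pow, hsq]; ring
    have hA2 : A * v₀^2 = (1 + ε - ε^2) * (8*ε) / 2 := by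
      rw [hA, hv₀sq]; field_simp
    have h4 : v₀^4 = (8*ε*(1+ε)^2)^2 := by rw [show v₀^4 = (v₀^2)^2 by ring, hv₀sq]
    have h6 : v₀^6 = (8*ε*(1+ε)^2)^3 := by rw [show v₀^6 = (v₀^2)^3 by ring, hv₀sq]
    rw [hv₀sq, h4, h6] at hlc
    rw [hA2]
    have e2 : 0 ≤ ε^2 := sq_nonneg ε
    have e3 : ε^3 ≤ ε^2/9 := by nlinarith
    have e4 : ε^4 ≤ ε^2/81 := by nlinarith [sq_nonneg ε, pow_le_pow_left₀ hε0.le hε1 2]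
    have e5 : ε^5 ≤ ε^2/729 := by nlinarith [e4]
    have e6 : ε^6 ≤ ε^2/6561 := by nlinarith [e5]
    have e7 : ε^7 ≤ ε^2/59049 := by nlinarith [e6]
    have e8 : ε^8 ≤ ε^2/531441 := by nlinarith [e7]
    have e9 : ε^9 ≤ ε^2/4782969 := by nlinarith [e8]
    have e3p : 0 ≤ ε^3 := by positivity
    nlinarith [hlc, e3, e4, e5, e6, e7, e8, e9, e3p]
  have hfin : 0 ≤ A * v^2 - Real.log (Real.cosh v) := le_trans hDv₀ key
  have hAv2 : A * v^2 = (1 + ε - ε^2) * u^2 / 2 := by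
    rw [hA, hvdef]; field_simp
  rw [hAv2] at hfin
  have hexp : (1 + ε - ε^2) * u^2 / 2 = (1 + ε) * u^2 / 2 - ε^2 * u^2 / 2 := by ring
  rw [hvdef] at hfin
  linarith [hfin]
end

section
/- Let β = 1 + ε + iR with 0 < ε ≤ 1/9, √(24ε) ≤ R ≤ π/√(128ε), and let 0 ≤ u ≤ √(8ε). Then Re(β u²/2 − log(cosh(β u))) = (1+ε)u²/2 − (1/2)·log(cosh²((1+ε)u) − sin²(uR)) ≥ ε u²/2. -/
lemma cosh_poly_bound {a : ℝ} (h0 : 0 ≤ a) (h1 : a ≤ 1) :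
    Real.cosh a ≤ 1 + a^2/2 + a^4*(5/96) := by
  have ha : |a| ≤ 1 := by rwa [abs_of_nonneg h0]
  have hna : |(-a)| ≤ 1 := by rwa [abs_neg]
  have hb1 := Real.exp_bound ha (n := 4) (by norm_num)
  have hb2 := Real.exp_bound hna (n := 4) (by norm_num)
  rw [abs_of_nonneg h0] at hb1
  rw [abs_neg, abs_of_nonneg h0] at hb2
  simp [Finset.sum_range_succ, Nat.factorial] at hb1 hb2
  rw [abs_sub_le_iff] at hb1 hb2
  rw [Real.cosh_eq]
  obtain ⟨hb1a, -⟩ := hb1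
  obtain ⟨hb2a, -⟩ := hb2
  nlinarith [pow_nonneg h0 3, pow_nonneg h0 4]


lemma poly_bound {ε s : ℝ} (hε0 : 0 < ε) (hεle : ε ≤ 3/50) (hs0 : 0 ≤ s) (hs : s ≤ 8*ε) :
    (1 + (1+ε)^2*s/2 + (1+ε)^4*s^2*(5/96))^2 ≤ 1 + s + (24/2.481)*ε*s := by
  set t : ℝ := (1+ε)^2*s with ht
  have htt : (1+ε)^4*s^2 = t^2 := by rw [ht]; ring
  rw [htt]
  have ht0 : 0 ≤ t := by positivity
  have hts : s ≤ t := by nlinarith [ht, mul_nonneg hs0 hε0.le, sq_nonneg ε, mul_nonneg (mul_nonneg hs0 hε0.le) hε0.le]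
  have ht1 : t ≤ s + 2.06*ε*s := by nlinarith [ht, mul_nonneg (mul_nonneg hs0 hε0.le) hε0.le]
  have ht2 : t ≤ 8.9888*ε := by nlinarith [ht, mul_nonneg (mul_nonneg hs0 hε0.le) hε0.le, sq_nonneg ε, mul_nonneg hs0 hε0.le]
  have ht3 : t ≤ 0.54 := by nlinarith [ht2]
  have e1 : ε*t ≤ 1.1236*(ε*s) := by nlinarith [mul_le_mul_of_nonneg_left ht1 hε0.le, mul_nonneg (mul_nonneg hs0 hε0.le) hε0.le]
  have e2 : t^2 ≤ 10.2*(ε*s) := by nlinarith [mul_le_mul_of_nonneg_left ht2 ht0, e1]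
  have e3 : t^3 ≤ 0.54*t^2 := by nlinarith [mul_le_mul_of_nonneg_left ht3 (mul_nonneg ht0 ht0)]
  have e4 : t^4 ≤ 0.54*t^3 := by nlinarith [mul_le_mul_of_nonneg_left ht3 (mul_nonneg (mul_nonneg ht0 ht0) ht0)]
  nlinarith [e2, e3, e4, ht1, mul_nonneg (mul_nonneg ht0 ht0) ht0]


set_option maxHeartbeats 1000000 in
open Complex in
theorem stmt_6 (ε R u : ℝ) (hε0 : 0 < ε) (hε1 : ε ≤ 1/9)
    (hR1 : Real.sqrt (24 * ε) ≤ R) (hR2 : R ≤ Real.pi / Real.sqrt (128 * ε))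
    (hu0 : 0 ≤ u) (hu1 : u ≤ Real.sqrt (8 * ε))
    (β : ℂ) (hβ : β = 1 + ε + Complex.I * R) :
    (β * u^2 / 2 - Complex.log (Complex.cosh (β * u))).re
      = (1 + ε) * u^2 / 2
        - (1/2) * Real.log ((Real.cosh ((1 + ε) * u))^2 - (Real.sin (u * R))^2) ∧
    (β * u^2 / 2 - Complex.log (Complex.cosh (β * u))).re ≥ ε * u^2 / 2 := by
  set x : ℝ := (1+ε)*u with hxdef
  set y : ℝ := u*R with hydef
  set D : ℝ := Real.cosh x ^ 2 - Real.sin y ^ 2 with hD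
  -- basic facts
  have hR0 : 0 ≤ R := (Real.sqrt_nonneg _).trans hR1
  have hy0 : 0 ≤ y := mul_nonneg hu0 hR0
  have h8 : (0:ℝ) < 8 * ε := by linarith
  have hu2 : u^2 ≤ 8*ε := by
    have := Real.sq_sqrt h8.le
    nlinarith [Real.sqrt_nonneg (8*ε)]
  have hR2sq : 24*ε ≤ R^2 := by
    have := Real.sq_sqrt (by linarith : (0:ℝ) ≤ 24*ε)
    nlinarith [Real.sqrt_nonneg (24*ε)]
  have hs128 : Real.sqrt (128*ε) = 4 * Real.sqrt (8*ε) := by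
    rw [show (128:ℝ)*ε = 16*(8*ε) by ring, show (16:ℝ) = 4^2 by norm_num,
      Real.sqrt_mul (by positivity), Real.sqrt_sq (by norm_num)]
  have hs8pos : 0 < Real.sqrt (8*ε) := Real.sqrt_pos.mpr h8
  have hyle : y ≤ Real.pi / 4 := by
    have h1 : u * R ≤ Real.sqrt (8*ε) * (Real.pi / Real.sqrt (128*ε)) :=
      mul_le_mul hu1 hR2 hR0 (Real.sqrt_nonneg _)
    rw [hs128] at h1
    calc y ≤ Real.sqrt (8*ε) * (Real.pi / (4 * Real.sqrt (8*ε))) := h1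
      _ = Real.pi / 4 := by field_simp
  have hεle : ε ≤ 3/50 := by
    have h1 : Real.sqrt (24*ε) ≤ Real.pi / Real.sqrt (128*ε) := hR1.trans hR2
    have h2 : Real.sqrt (24*ε) * Real.sqrt (128*ε) ≤ Real.pi :=
      (le_div_iff₀ (by rw [hs128]; positivity)).mp h1
    have h3 : Real.sqrt (24*ε) * Real.sqrt (128*ε) = Real.sqrt (3072 * ε^2) := by
      rw [← Real.sqrt_mul (by linarith)]; ring_nf
    have h4 : (3072:ℝ) * ε^2 ≤ Real.pi ^ 2 := by
      have h5 : Real.sqrt (3072*ε^2) ≤ Real.pi := by rw [← h3]; exact h2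
      have := Real.sq_sqrt (by positivity : (0:ℝ) ≤ 3072*ε^2)
      nlinarith [Real.sqrt_nonneg (3072*ε^2)]
    nlinarith [Real.pi_lt_d2]
  -- cosh(β u) decomposition
  have hcosh : Complex.cosh (β * u)
      = Complex.ofReal (Real.cosh x * Real.cos y)
      + Complex.ofReal (Real.sinh x * Real.sin y) * Complex.I := by
    have h : β * u = ((x : ℝ) : ℂ) + ((y : ℝ) : ℂ) * Complex.I := by
      rw [hβ, hxdef, hydef]; push_cast; ring
    rw [h, Complex.cosh_add, Complex.cosh_mul_I, Complex.sinh_mul_I]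
    push_cast; ring
  have habs2 : ‖Complex.cosh (β * u)‖ ^ 2 = D := by
    rw [hcosh, Complex.sq_norm, Complex.normSq_apply, hD]
    simp only [Complex.add_re, Complex.add_im, Complex.ofReal_re, Complex.ofReal_im,
      Complex.mul_re, Complex.mul_im, Complex.I_re, Complex.I_im]
    have c1 := Real.sin_sq_add_cos_sq y
    have c2 := Real.cosh_sq_sub_sinh_sq x
    linear_combination (Real.cosh x ^ 2) * c1 - (Real.sin y ^ 2) * c2
  -- positivity of D
  have hsin_le : Real.sin y ≤ y := Real.sin_le hy0
  have hsin0 : 0 ≤ Real.sin y := Real.sin_nonneg_of_nonneg_of_le_pi hy0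
      (hyle.trans (by nlinarith [Real.pi_pos]))
  have hylt : y ≤ 0.79 := hyle.trans (by nlinarith [Real.pi_lt_d2])
  have hcosh1 : 1 ≤ Real.cosh x := Real.one_le_cosh x
  have hDpos : 0 < D := by
    rw [hD]
    nlinarith [hsin_le, hsin0, hylt, hcosh1]
  have habs_pos : 0 < ‖Complex.cosh (β * u)‖ := by
    rcases (norm_nonneg (Complex.cosh (β * u))).lt_or_eq with h | h
    · exact h
    · exfalso; rw [← h] at habs2; simp at habs2; nlinarith
  -- the equality
  have hre2 : (β * u^2 / 2).re = (1+ε) * u^2 / 2 := by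
    have h : β * u^2 / 2 = Complex.ofReal ((1+ε)*u^2/2) + Complex.ofReal (R*u^2/2) * Complex.I := by
      rw [hβ]; push_cast; ring
    rw [h]
    simp only [Complex.add_re, Complex.mul_re, Complex.I_re, Complex.I_im,
      Complex.ofReal_re, Complex.ofReal_im]
    ring
  have hlogre : (Complex.log (Complex.cosh (β * u))).re = (1/2) * Real.log D := by
    rw [Complex.log_re, ← habs2, Real.log_pow]
    push_cast; ring
  have heq : (β * u^2 / 2 - Complex.log (Complex.cosh (β * u))).re
      = (1 + ε) * u^2 / 2 - (1/2) * Real.log D := by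
    rw [Complex.sub_re, hre2, hlogre]
  refine ⟨heq, ?_⟩
  rw [heq]
  -- need log D ≤ u^2
  have hlogD : Real.log D ≤ u^2 := by
    rw [Real.log_le_iff_le_exp hDpos]
    have hx0 : 0 ≤ x := by rw [hxdef]; positivity
    have hx2eq : x^2 = (1+ε)^2 * u^2 := by rw [hxdef]; ring
    have hx4eq : x^4 = (1+ε)^4 * (u^2)^2 := by rw [hxdef]; ring
    have hx2b : x^2 ≤ 0.54 := by
      nlinarith [hx2eq, hu2, mul_le_mul_of_nonneg_left hu2 hε0.le,
        mul_le_mul_of_nonneg_left hεle hε0.le, hεle, hε0.le, sq_nonneg u]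
    have hx1 : x ≤ 1 := by nlinarith [hx2b, hx0]
    have hP := cosh_poly_bound hx0 hx1
    have hy2' : y ≤ Real.pi/2 := by linarith [Real.pi_pos]
    have h5 := Real.mul_le_sin hy0 hy2'
    have h6 : y ≤ Real.pi/2 * Real.sin y := by
      have h := mul_le_mul_of_nonneg_left h5 (by positivity : (0:ℝ) ≤ Real.pi/2)
      calc y = Real.pi/2 * (2/Real.pi * y) := by
              field_simp
        _ ≤ Real.pi/2 * Real.sin y := h
    have h7 : y^2 ≤ (Real.pi/2 * Real.sin y)^2 := pow_le_pow_left₀ hy0 h6 2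
    have h7' : y^2 ≤ Real.pi^2 * Real.sin y^2 / 4 := by
      calc y^2 ≤ (Real.pi/2 * Real.sin y)^2 := h7
        _ = Real.pi^2 * Real.sin y^2 / 4 := by ring
    have hpi2 : Real.pi^2 ≤ 9.9225 := by
      calc Real.pi^2 ≤ 3.15^2 := pow_le_pow_left₀ Real.pi_pos.le Real.pi_lt_d2.le 2
        _ ≤ 9.9225 := by norm_num
    have hprod : Real.pi^2 * Real.sin y^2 ≤ 9.9225 * Real.sin y^2 :=
      mul_le_mul_of_nonneg_right hpi2 (sq_nonneg _)
    have hy2ge : 24*ε*u^2 ≤ y^2 := by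
      have h := mul_le_mul_of_nonneg_left hR2sq (sq_nonneg u)
      calc 24*ε*u^2 = u^2*(24*ε) := by ring
        _ ≤ u^2*R^2 := h
        _ = y^2 := by rw [hydef]; ring
    have hsinsq : (24/2.481)*ε*u^2 ≤ Real.sin y^2 := by
      linarith [hy2ge, h7', hprod, sq_nonneg (Real.sin y)]
    have hexp : 1 + u^2 ≤ Real.exp (u^2) := by linarith [Real.add_one_le_exp (u^2)]
    have hcsq : Real.cosh x^2 ≤ (1 + x^2/2 + x^4*(5/96))^2 :=
      pow_le_pow_left₀ (Real.cosh_pos (x := x)).le hP 2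
    have hpoly := poly_bound hε0 hεle (sq_nonneg u) hu2
    rw [← hx2eq, ← hx4eq] at hpoly
    rw [hD]
    linarith [hcsq, hpoly, hsinsq, hexp]
  linarith
end

section
/- For any complex β with Re β > 0 and any positive integer N, the Curie–Weiss partition function satisfies Z_{β,N} = √(βN/(2π)) · ∫_{-∞}^{∞} exp(−N f_β(u)) du, where f_β(u) = β u²/2 − log(cosh(β u)). -/
open Complex MeasureTheory

lemma cosh_ne_zero_of_re_pos {β : ℂ} (hβ : 0 < β.re) (u : ℝ) :
    Complex.cosh (β * u) ≠ 0 := by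
  intro h
  rw [Complex.cosh, div_eq_zero_iff] at h
  have h1 : Complex.exp (β * u) + Complex.exp (-(β * u)) = 0 := h.resolve_right (by norm_num)
  have h2 : Complex.exp (2 * (β * u)) = -1 := by
    have := congrArg (· * Complex.exp (β * u)) h1
    simp only [add_mul, ← Complex.exp_add] at this
    simp only [neg_add_cancel, Complex.exp_zero, zero_mul] at this
    rw [two_mul]
    linear_combination this
  have h3 : Real.exp ((2 * (β * u)).re) = 1 := by
    have := congrArg (‖·‖) h2
    simpa [Complex.norm_exp] using this
  have h4 : (2 * (β * u)).re = 0 := by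
    simpa using h3
  have hu : u = 0 := by
    simp only [Complex.mul_re, Complex.ofReal_re, Complex.ofReal_im] at h4
    have : 2 * (β.re * u) = 0 := by simpa using h4
    rcases mul_eq_zero.mp this with h | h
    · norm_num at h
    · rcases mul_eq_zero.mp h with h | h
      · exact absurd h hβ.ne'
      · exact h
  rw [hu] at h
  simp at h

lemma binary_expand (N : ℕ) (x : ℂ) :
    (Complex.exp x + Complex.exp (-x)) ^ N
      = ∑ σ : Fin N → Bool, Complex.exp ((∑ i, (if σ i then (1:ℂ) else -1)) * x) := by
  calc (Complex.exp x + Complex.exp (-x)) ^ N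
      = ∏ _i : Fin N, ∑ b : Bool, Complex.exp ((if b then (1:ℂ) else -1) * x) := by
        simp [Finset.prod_const, add_comm]
    _ = ∑ σ : Fin N → Bool, ∏ i, Complex.exp ((if σ i then (1:ℂ) else -1) * x) :=
        Fintype.prod_sum _
    _ = _ := by
        refine Finset.sum_congr rfl fun σ _ => ?_
        rw [← Complex.exp_sum, Finset.sum_mul]

open scoped BigOperators in
theorem stmt_7 (β : ℂ) (hβ : 0 < β.re) (N : ℕ) (hN : 0 < N) :
    ((2:ℂ)^N)⁻¹ * ∑ σ : Fin N → Bool,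
        Complex.exp (β / (2 * N) * (∑ i, (if σ i then (1:ℂ) else -1))^2)
      = (β * N / (2 * Real.pi)) ^ ((1:ℂ)/2) *
        ∫ u : ℝ, Complex.exp (-(N:ℂ) *
          (β * u^2 / 2 - Complex.log (Complex.cosh (β * u)))) := by
  have hNne : (N:ℂ) ≠ 0 := Nat.cast_ne_zero.mpr hN.ne'
  have hβne : β ≠ 0 := fun h => by simp [h] at hβ
  have hπ : (Real.pi : ℂ) ≠ 0 := by exact_mod_cast Real.pi_ne_zero
  -- rewrite the integrand
  have hb : (0:ℝ) < ((N:ℂ) * β / 2).re := by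
    simp only [Complex.div_re, Complex.mul_re, Complex.natCast_re, Complex.natCast_im]
    have : ((2:ℂ)).re = 2 := by norm_num
    simp [Complex.mul_re, Complex.normSq]
    positivity
  have hinteg : ∀ σ : Fin N → Bool, Integrable (fun u : ℝ =>
      Complex.exp (-((N:ℂ) * β / 2) * u ^ 2 + (β * ∑ i, (if σ i then (1:ℂ) else -1)) * u + 0)) :=
    fun σ => integrable_cexp_quadratic hb _ _
  have h1 : ∀ u : ℝ, Complex.exp (-(N:ℂ) * (β * u^2 / 2 - Complex.log (Complex.cosh (β * u))))
      = ((2:ℂ)^N)⁻¹ * ∑ σ : Fin N → Bool,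
          Complex.exp (-((N:ℂ) * β / 2) * u ^ 2 + (β * ∑ i, (if σ i then (1:ℂ) else -1)) * u + 0) := by
    intro u
    have hc := cosh_ne_zero_of_re_pos hβ u
    have e1 : Complex.exp (-(N:ℂ) * (β * u^2 / 2 - Complex.log (Complex.cosh (β * u))))
        = Complex.exp (-((N:ℂ) * β / 2) * u^2) * Complex.cosh (β * u) ^ N := by
      rw [show -(N:ℂ) * (β * u^2 / 2 - Complex.log (Complex.cosh (β * u)))
          = -((N:ℂ) * β / 2) * u^2 + (N:ℕ) * Complex.log (Complex.cosh (β * u)) by ring,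
        Complex.exp_add, Complex.exp_nat_mul, Complex.exp_log hc]
    rw [e1, Complex.cosh, div_pow, binary_expand N (β * u), Finset.sum_div, Finset.mul_sum,
      Finset.mul_sum]
    refine Finset.sum_congr rfl fun σ _ => ?_
    rw [add_zero, Complex.exp_add, mul_comm β (∑ i, (if σ i then (1:ℂ) else -1)),
      mul_assoc (∑ i, (if σ i then (1:ℂ) else -1)) β (u:ℂ)]
    ring
  simp_rw [h1]
  rw [integral_const_mul, integral_finset_sum _ (fun σ _ => hinteg σ)]
  have h2 : ∀ σ : Fin N → Bool,
      (∫ u : ℝ, Complex.exp (-((N:ℂ) * β / 2) * u ^ 2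
          + (β * ∑ i, (if σ i then (1:ℂ) else -1)) * u + 0))
        = ((Real.pi : ℂ) / ((N:ℂ) * β / 2)) ^ ((1:ℂ)/2)
            * Complex.exp (β / (2 * N) * (∑ i, (if σ i then (1:ℂ) else -1))^2) := by
    intro σ
    rw [integral_cexp_quadratic (by simpa using hb) _ _, neg_neg]
    congr 2
    field_simp
    ring
  simp_rw [h2]
  have h3 : (β * N / (2 * Real.pi)) ^ ((1:ℂ)/2) * ((Real.pi : ℂ) / ((N:ℂ) * β / 2)) ^ ((1:ℂ)/2)
      = 1 := by
    have hz : (Real.pi : ℂ) / ((N:ℂ) * β / 2) = (β * N / (2 * Real.pi))⁻¹ := by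
      field_simp
    have harg : (β * N / (2 * Real.pi)).arg ≠ Real.pi := by
      intro h
      have hre : 0 < (β * N / (2 * Real.pi)).re := by
        have : β * N / (2 * Real.pi) = (N / (2 * Real.pi) : ℝ) * β := by push_cast; ring
        rw [this, Complex.re_ofReal_mul]
        have : (0:ℝ) < (N:ℝ) / (2 * Real.pi) := by positivity
        positivity
      rw [Complex.arg_eq_pi_iff] at h
      linarith [h.1]
    rw [hz, Complex.inv_cpow _ _ harg, mul_inv_cancel₀]
    rw [Ne, Complex.cpow_eq_zero_iff]
    intro h
    have := h.1
    rw [div_eq_zero_iff] at this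
    rcases this with h' | h'
    · exact (mul_ne_zero hβne hNne) h'
    · exact (mul_ne_zero two_ne_zero hπ) h'
  rw [← Finset.mul_sum]
  linear_combination (-(((2:ℂ)^N)⁻¹ * ∑ σ : Fin N → Bool,
      Complex.exp (β / (2 * N) * (∑ i, (if σ i then (1:ℂ) else -1))^2))) * h3
end

section
/- Let h_β(u) = u²/(2β) − log cosh u for complex u near 0 and complex β near 1, and let P₄(u) = (1/β − 1)·u²/2 + u⁴/12 be its fourth-order Taylor polynomial. Then for every complex u with |u| ≤ π/4, |h_β'(u) − P₄'(u)| ≤ 5|u|⁵. -/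
open Complex Finset

lemma sum5_sub (u : ℂ) :
    (∑ m ∈ range 5, u ^ m / m.factorial) - (∑ m ∈ range 5, (-u) ^ m / m.factorial)
      = 2 * (u + u ^ 3 / 6) := by
  simp [Finset.sum_range_succ, Nat.factorial]
  ring

lemma sum4_add (u : ℂ) :
    (∑ m ∈ range 4, u ^ m / m.factorial) + (∑ m ∈ range 4, (-u) ^ m / m.factorial)
      = 2 * (1 + u ^ 2 / 2) := by
  simp [Finset.sum_range_succ, Nat.factorial]
  ring

lemma sum2_add (u : ℂ) :
    (∑ m ∈ range 2, u ^ m / m.factorial) + (∑ m ∈ range 2, (-u) ^ m / m.factorial)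
      = 2 := by
  simp [Finset.sum_range_succ, Nat.factorial]
  ring

lemma sinh_taylor (u : ℂ) (hu : ‖u‖ ≤ 1) :
    ‖Complex.sinh u - (u + u ^ 3 / 6)‖ ≤ ‖u‖ ^ 5 / 100 := by
  have h1 := Complex.exp_bound hu (n := 5) (by norm_num)
  have h2 := Complex.exp_bound (x := -u) (by simpa using hu) (n := 5) (by norm_num)
  rw [norm_neg] at h2
  norm_num [Nat.factorial] at h1 h2
  have key : Complex.sinh u - (u + u ^ 3 / 6)
      = ((Complex.exp u - ∑ m ∈ range 5, u ^ m / m.factorial)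
        - (Complex.exp (-u) - ∑ m ∈ range 5, (-u) ^ m / m.factorial)) / 2 := by
    rw [Complex.sinh]
    linear_combination (sum5_sub u) / 2
  rw [key, norm_div]
  have h2' : ‖(2:ℂ)‖ = 2 := by norm_num
  rw [h2']
  have tri := norm_sub_le (Complex.exp u - ∑ m ∈ range 5, u ^ m / m.factorial)
    (Complex.exp (-u) - ∑ m ∈ range 5, (-u) ^ m / m.factorial)
  linarith

lemma cosh_taylor (u : ℂ) (hu : ‖u‖ ≤ 1) :
    ‖Complex.cosh u - (1 + u ^ 2 / 2)‖ ≤ 5 * ‖u‖ ^ 4 / 96 := by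
  have h1 := Complex.exp_bound hu (n := 4) (by norm_num)
  have h2 := Complex.exp_bound (x := -u) (by simpa using hu) (n := 4) (by norm_num)
  rw [norm_neg] at h2
  norm_num [Nat.factorial] at h1 h2
  have key : Complex.cosh u - (1 + u ^ 2 / 2)
      = ((Complex.exp u - ∑ m ∈ range 4, u ^ m / m.factorial)
        + (Complex.exp (-u) - ∑ m ∈ range 4, (-u) ^ m / m.factorial)) / 2 := by
    rw [Complex.cosh]
    linear_combination (sum4_add u) / 2
  rw [key, norm_div]
  have h2' : ‖(2:ℂ)‖ = 2 := by norm_num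
  rw [h2']
  have tri := norm_add_le (Complex.exp u - ∑ m ∈ range 4, u ^ m / m.factorial)
    (Complex.exp (-u) - ∑ m ∈ range 4, (-u) ^ m / m.factorial)
  linarith

lemma cosh_sub_one (u : ℂ) (hu : ‖u‖ ≤ 1) :
    ‖Complex.cosh u - 1‖ ≤ 3 * ‖u‖ ^ 2 / 4 := by
  have h1 := Complex.exp_bound hu (n := 2) (by norm_num)
  have h2 := Complex.exp_bound (x := -u) (by simpa using hu) (n := 2) (by norm_num)
  rw [norm_neg] at h2
  norm_num [Nat.factorial] at h1 h2
  have key : Complex.cosh u - 1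
      = ((Complex.exp u - ∑ m ∈ range 2, u ^ m / m.factorial)
        + (Complex.exp (-u) - ∑ m ∈ range 2, (-u) ^ m / m.factorial)) / 2 := by
    rw [Complex.cosh]
    linear_combination (sum2_add u) / 2
  rw [key, norm_div]
  have h2' : ‖(2:ℂ)‖ = 2 := by norm_num
  rw [h2']
  have tri := norm_add_le (Complex.exp u - ∑ m ∈ range 2, u ^ m / m.factorial)
    (Complex.exp (-u) - ∑ m ∈ range 2, (-u) ^ m / m.factorial)
  linarith

theorem stmt_10 (β : ℂ) (hβ : β ≠ 0) (u : ℂ) (hu : ‖u‖ ≤ Real.pi / 4) :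
    ‖(u / β - Complex.tanh u) - ((1/β - 1) * u + u^3 / 3)‖
      ≤ 5 * ‖u‖ ^ 5 := by
  have hu1 : ‖u‖ ≤ 1 := by
    have := Real.pi_le_four
    linarith
  set a := ‖u‖ with ha
  have ha0 : 0 ≤ a := norm_nonneg u
  -- lower bound on |cosh u|
  have hc1 := cosh_sub_one u hu1
  have hclow : (1:ℝ)/4 ≤ ‖Complex.cosh u‖ := by
    have tri := norm_add_le (Complex.cosh u) (1 - Complex.cosh u)
    have e1 : ‖1 - Complex.cosh u‖ = ‖Complex.cosh u - 1‖ :=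
      norm_sub_rev _ _
    simp only [add_sub_cancel, norm_one] at tri
    nlinarith
  have hcne : Complex.cosh u ≠ 0 := by
    intro h
    rw [h] at hclow
    simp at hclow
    linarith
  -- key algebraic reduction
  have hred : (u / β - Complex.tanh u) - ((1/β - 1) * u + u^3 / 3)
      = ((u - u^3/3) * Complex.cosh u - Complex.sinh u) / Complex.cosh u := by
    rw [Complex.tanh_eq_sinh_div_cosh]
    field_simp
    ring
  rw [hred, norm_div]
  -- numerator bound
  have hs := sinh_taylor u hu1
  have hc := cosh_taylor u hu1
  set Rs := Complex.sinh u - (u + u ^ 3 / 6) with hRs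
  set Rc := Complex.cosh u - (1 + u ^ 2 / 2) with hRc
  have hN : (u - u^3/3) * Complex.cosh u - Complex.sinh u
      = -u^5/6 + (u - u^3/3) * Rc - Rs := by
    rw [hRs, hRc]; ring
  have ha2 : a ^ 2 ≤ 1 := by nlinarith
  have ha7 : a ^ 7 ≤ a ^ 5 := by
    calc a ^ 7 = a ^ 5 * a ^ 2 := by ring
      _ ≤ a ^ 5 * 1 := by
          exact mul_le_mul_of_nonneg_left ha2 (pow_nonneg ha0 5)
      _ = a ^ 5 := mul_one _
  have hNb : ‖(u - u^3/3) * Complex.cosh u - Complex.sinh u‖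
      ≤ a ^ 5 * (5/4) := by
    rw [hN]
    have t1 : ‖-u^5/6‖ = a^5/6 := by
      rw [norm_div, norm_neg, norm_pow]
      norm_num [ha]
    have t2 : ‖(u - u^3/3) * Rc‖ ≤ (a + a^3/3) * (5 * a^4/96) := by
      rw [norm_mul]
      have h4 : ‖u - u^3/3‖ ≤ a + a^3/3 := by
        calc ‖u - u^3/3‖ ≤ ‖u‖ + ‖u^3/3‖ :=
              norm_sub_le _ _
          _ = a + a^3/3 := by rw [norm_div, norm_pow]; norm_num [ha]
      exact mul_le_mul h4 hc (norm_nonneg _) (by positivity)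
    calc ‖-u^5/6 + (u - u^3/3) * Rc - Rs‖
        ≤ ‖-u^5/6 + (u - u^3/3) * Rc‖ + ‖Rs‖ :=
          norm_sub_le _ _
      _ ≤ ‖-u^5/6‖ + ‖(u - u^3/3) * Rc‖ + ‖Rs‖ := by
          linarith [norm_add_le (-u^5/6) ((u - u^3/3) * Rc)]
      _ ≤ a^5/6 + (a + a^3/3) * (5 * a^4/96) + a^5/100 := by
          rw [t1]; linarith [t2, hs]
      _ ≤ a ^ 5 * (5/4) := by nlinarith [ha7, pow_nonneg ha0 5]
  calc ‖(u - u^3/3) * Complex.cosh u - Complex.sinh u‖ / ‖Complex.cosh u‖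
      ≤ (a ^ 5 * (5/4)) / (1/4) :=
        div_le_div₀ (by positivity) hNb (by norm_num) hclow
      _ = 5 * a ^ 5 := by ring
end
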